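/- For even n ≥ 8, R(W_n, W_n) ≥ 3n − 2; specifically, neither the graph 3K_{n−1} (three disjoint copies of K_{n−1}) nor its complement contains W_n as a subgraph. -/

import Mathlib

open SimpleGraph

/-- `H` is contained in `G` as a subgraph. -/
def Contains {α β : Type*} (G : SimpleGraph α) (H : SimpleGraph β) : Prop :=
  ∃ f : H →g G, Function.Injective f

/-- Every red/blue coloring of `K_N` (red = `C`, blue = `Cᶜ`) has a red `G` or blue `H`. -/
def RamseyProp {α β : Type*} (N : ℕ) (G : SimpleGraph α) (H : SimpleGraph β) : Prop :=
  ∀ C : SimpleGraph (Fin N), Contains C G ∨ Contains Cᶜ H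

/-- The Ramsey number `R(G, H)`. -/
noncomputable def ramseyNumber {α β : Type*} (G : SimpleGraph α) (H : SimpleGraph β) : ℕ :=
  sInf {N | RamseyProp N G H}

/-- The join `G + H`: disjoint union plus all edges in between. -/
def graphJoin {α β : Type*} (G : SimpleGraph α) (H : SimpleGraph β) : SimpleGraph (α ⊕ β) :=
  SimpleGraph.fromRel (fun x y =>
    match x, y with
    | Sum.inl a, Sum.inl b => G.Adj a b
    | Sum.inr a, Sum.inr b => H.Adj a b
    | _, _ => True)

/-- The wheel `W_n = K_1 + C_{n-1}` on `n` vertices. -/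
def wheel (n : ℕ) : SimpleGraph (Fin 1 ⊕ Fin (n - 1)) :=
  graphJoin ⊥ (SimpleGraph.cycleGraph (n - 1))

/-- A perfect matching `k • K_2` on `2k` vertices. -/
def matching (k : ℕ) : SimpleGraph (Fin k × Fin 2) :=
  SimpleGraph.fromRel (fun x y => x.1 = y.1)

/-- The fan `F_k = K_1 + k • K_2`. -/
def fan (k : ℕ) : SimpleGraph (Fin 1 ⊕ Fin k × Fin 2) :=
  graphJoin ⊥ (matching k)

/-- The kipas `K̂_n = K_1 + P_{n-1}` on `n` vertices. -/
def kipas (n : ℕ) : SimpleGraph (Fin 1 ⊕ Fin (n - 1)) :=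
  graphJoin ⊥ (SimpleGraph.pathGraph (n - 1))

/-- The blow-up `G[K_2]`: each vertex replaced by an adjacent pair; vertices in
different pairs adjacent iff the original vertices are adjacent. -/
def blowUp {α : Type*} (G : SimpleGraph α) : SimpleGraph (α × Fin 2) :=
  SimpleGraph.fromRel (fun x y => x.1 = y.1 ∨ G.Adj x.1 y.1)


/-- The graph 3K_{n-1}: three disjoint copies of the complete graph on n-1 vertices. -/
def threeCliques (n : ℕ) : SimpleGraph (Fin 3 × Fin (n - 1)) :=
  SimpleGraph.fromRel (fun x y => x.1 = y.1)

/-! ### Auxiliary: finite Ramsey theorem for cliques -/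

/-- `C` has a clique of size `s` (as an injective pairwise-adjacent tuple). -/
def hasCliqueF {N : ℕ} (C : SimpleGraph (Fin N)) (s : ℕ) : Prop :=
  ∃ f : Fin s → Fin N, Function.Injective f ∧ ∀ i j, i ≠ j → C.Adj (f i) (f j)

lemma ramHalf {N N1 s t : ℕ} (C : SimpleGraph (Fin N)) (v : Fin N)
    (hA : N1 ≤ Nat.card {u // C.Adj v u})
    (h1 : ∀ D : SimpleGraph (Fin N1), hasCliqueF D s ∨ hasCliqueF Dᶜ t) :
    hasCliqueF C (s + 1) ∨ hasCliqueF Cᶜ t := by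
  classical
  rw [Nat.card_eq_fintype_card, Fintype.card_subtype] at hA
  obtain ⟨A, hAsub, hAcard⟩ := Finset.exists_subset_card_eq hA
  let e : Fin N1 → Fin N := fun i => (A.orderIsoOfFin hAcard i).1
  have einj : Function.Injective e := fun i j h =>
    (A.orderIsoOfFin hAcard).injective (Subtype.ext h)
  have eadj : ∀ i, C.Adj v (e i) := fun i => by
    have := hAsub (A.orderIsoOfFin hAcard i).2
    exact (Finset.mem_filter.mp this).2
  let D : SimpleGraph (Fin N1) :=
    { Adj := fun i j => C.Adj (e i) (e j)
      symm := ⟨fun i j (h : C.Adj (e i) (e j)) => h.symm⟩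
      loopless := ⟨fun i (h : C.Adj (e i) (e i)) => C.irrefl h⟩ }
  rcases h1 D with ⟨f, finj, fadj⟩ | ⟨f, finj, fadj⟩
  · left
    refine ⟨Fin.cons v (e ∘ f), ?_, ?_⟩
    · rw [Fin.cons_injective_iff]
      refine ⟨?_, einj.comp finj⟩
      rintro ⟨i, hi⟩
      exact (C.ne_of_adj (eadj (f i))) hi.symm
    · intro i j
      induction i using Fin.cases with
      | zero =>
          induction j using Fin.cases with
          | zero => intro h; exact absurd rfl h
          | succ j' => intro _; simpa using eadj (f j')
      | succ i' =>
          induction j using Fin.cases with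
          | zero => intro _; simpa using (eadj (f i')).symm
          | succ j' =>
              intro hij
              have hne : i' ≠ j' := fun h => hij (by rw [h])
              simpa using fadj i' j' hne
  · right
    refine ⟨e ∘ f, einj.comp finj, fun i j hij => ?_⟩
    have hne : e (f i) ≠ e (f j) := fun h => hij (finj (einj h))
    have hnadj : ¬ C.Adj (e (f i)) (e (f j)) := (fadj i j hij).2
    exact ⟨hne, hnadj⟩

lemma ramStep {N1 N2 s t : ℕ}
    (h1 : ∀ D : SimpleGraph (Fin N1), hasCliqueF D s ∨ hasCliqueF Dᶜ (t + 1))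
    (h2 : ∀ D : SimpleGraph (Fin N2), hasCliqueF D (s + 1) ∨ hasCliqueF Dᶜ t) :
    ∀ C : SimpleGraph (Fin (N1 + N2 + 1)), hasCliqueF C (s + 1) ∨ hasCliqueF Cᶜ (t + 1) := by
  classical
  intro C
  set v : Fin (N1 + N2 + 1) := ⟨N1 + N2, by omega⟩ with hv
  set A := Finset.univ.filter (fun u => C.Adj v u) with hA
  set B := Finset.univ.filter (fun u => Cᶜ.Adj v u) with hB
  have hcA : Nat.card {u // C.Adj v u} = A.card := by
    rw [Nat.card_eq_fintype_card]; exact Fintype.card_subtype _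
  have hcB : Nat.card {u // Cᶜ.Adj v u} = B.card := by
    rw [Nat.card_eq_fintype_card]; exact Fintype.card_subtype _
  have hcard : A.card + B.card = N1 + N2 := by
    have hdisj : Disjoint A B := by
      rw [Finset.disjoint_left]
      intro u hu hu'
      exact ((Finset.mem_filter.mp hu').2).2 (Finset.mem_filter.mp hu).2
    have hunion : A ∪ B = Finset.univ.erase v := by
      ext u
      simp only [hA, hB, Finset.mem_union, Finset.mem_filter, Finset.mem_univ, true_and,
        Finset.mem_erase, and_true, SimpleGraph.compl_adj]
      constructor
      · rintro (h | ⟨h, _⟩)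
        · exact fun huv => C.irrefl (huv ▸ h)
        · exact fun huv => h (huv ▸ rfl)
      · intro h
        by_cases hadjc : C.Adj v u
        · exact Or.inl hadjc
        · exact Or.inr ⟨fun hvu => h hvu.symm, hadjc⟩
    have := Finset.card_union_of_disjoint hdisj
    rw [hunion, Finset.card_erase_of_mem (Finset.mem_univ v)] at this
    simp only [Finset.card_univ, Fintype.card_fin] at this
    omega
  rcases le_or_gt N1 A.card with hc | hc
  · exact ramHalf C v (hcA ▸ hc) h1
  · have hc2 : N2 ≤ Nat.card {u // Cᶜ.Adj v u} := by omega
    have h2' : ∀ D : SimpleGraph (Fin N2), hasCliqueF D t ∨ hasCliqueF Dᶜ (s + 1) := by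
      intro D
      rcases h2 Dᶜ with h | h
      · exact Or.inr h
      · rw [compl_compl] at h; exact Or.inl h
    rcases ramHalf Cᶜ v hc2 h2' with h | h
    · exact Or.inr h
    · rw [compl_compl] at h; exact Or.inl h

lemma ramsey_exists : ∀ s t : ℕ, ∃ N, ∀ C : SimpleGraph (Fin N),
    hasCliqueF C s ∨ hasCliqueF Cᶜ t := by
  intro s
  induction s with
  | zero =>
      intro t
      exact ⟨0, fun C => Or.inl ⟨Fin.elim0, fun x => x.elim0, fun i => i.elim0⟩⟩
  | succ s ih =>
      intro t
      induction t with
      | zero =>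
          exact ⟨0, fun C => Or.inr ⟨Fin.elim0, fun x => x.elim0, fun i => i.elim0⟩⟩
      | succ t iht =>
          obtain ⟨N1, h1⟩ := ih (t + 1)
          obtain ⟨N2, h2⟩ := iht
          exact ⟨N1 + N2 + 1, ramStep h1 h2⟩

/-! ### From a clique to a wheel -/

lemma contains_wheel_of_clique {N n : ℕ} (hn : 1 ≤ n) {C : SimpleGraph (Fin N)}
    (h : hasCliqueF C n) : Contains C (wheel n) := by
  obtain ⟨g, ginj, gadj⟩ := h
  have hc : Fintype.card (Fin 1 ⊕ Fin (n - 1)) ≤ Fintype.card (Fin n) := by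
    simp only [Fintype.card_sum, Fintype.card_fin]
    omega
  obtain ⟨eE⟩ := Function.Embedding.nonempty_of_card_le hc
  let e : (Fin 1 ⊕ Fin (n - 1)) → Fin n := eE
  have einj : Function.Injective e := eE.injective
  refine ⟨⟨fun v => g (e v), ?_⟩, fun u v huv => einj (ginj huv)⟩
  intro u v huv
  exact gadj _ _ (fun h => huv.ne (einj h))

/-! ### The two negative containment results -/

lemma not_contains_red (n : ℕ) (hn : 8 ≤ n) : ¬ Contains (threeCliques n) (wheel n) := by
  rintro ⟨f, finj⟩
  have hadj : ∀ x y, (threeCliques n).Adj x y → x.1 = y.1 := by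
    intro x y h
    rcases (SimpleGraph.fromRel_adj _ x y).mp h with ⟨-, h | h⟩
    · exact h
    · exact h.symm
  have hub_adj : ∀ i : Fin (n - 1), (wheel n).Adj (Sum.inl 0) (Sum.inr i) := by
    intro i
    exact (SimpleGraph.fromRel_adj _ _ _).mpr ⟨by simp, Or.inl trivial⟩
  have hfst : ∀ v, (f v).1 = (f (Sum.inl 0)).1 := by
    rintro (a | i)
    · rw [Subsingleton.elim a 0]
    · exact (hadj _ _ (f.map_adj (hub_adj i))).symm
  have ginj : Function.Injective (fun v => (f v).2) := by
    intro u v huv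
    apply finj
    exact Prod.ext (by rw [hfst u, hfst v]) huv
  have hcard := Fintype.card_le_of_injective _ ginj
  simp only [Fintype.card_sum, Fintype.card_fin] at hcard
  omega

lemma not_contains_blue (n : ℕ) (hn : 8 ≤ n) (he : Even n) :
    ¬ Contains (threeCliques n)ᶜ (wheel n) := by
  rintro ⟨f, finj⟩
  have hadjc : ∀ x y, (threeCliques n)ᶜ.Adj x y → x.1 ≠ y.1 := by
    intro x y h hc
    exact ((SimpleGraph.compl_adj _ _ _).mp h).2
      ((SimpleGraph.fromRel_adj _ x y).mpr ⟨((SimpleGraph.compl_adj _ _ _).mp h).1, Or.inl hc⟩)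
  set a : Fin 3 := (f (Sum.inl 0)).1 with ha
  let c : Fin (n - 1) → Fin 3 := fun i => (f (Sum.inr i)).1
  have hub_adj : ∀ i : Fin (n - 1), (wheel n).Adj (Sum.inl 0) (Sum.inr i) := by
    intro i
    exact (SimpleGraph.fromRel_adj _ _ _).mpr ⟨by simp, Or.inl trivial⟩
  have hca : ∀ i, c i ≠ a := fun i h => (hadjc _ _ (f.map_adj (hub_adj i))) h.symm
  have hstep : ∀ i j : Fin (n - 1), (SimpleGraph.cycleGraph (n - 1)).Adj i j → c i ≠ c j := by
    intro i j hij
    have hw : (wheel n).Adj (Sum.inr i) (Sum.inr j) :=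
      (SimpleGraph.fromRel_adj _ _ _).mpr ⟨by simpa using hij.ne, Or.inl hij⟩
    exact hadjc _ _ (f.map_adj hw)
  have tri0 : ∀ (a x y z : Fin 3), x = z ∨ x = a ∨ y = a ∨ z = a ∨ x = y ∨ y = z := by decide
  have tri : ∀ (a x y z : Fin 3), x ≠ a → y ≠ a → z ≠ a → x ≠ y → y ≠ z → x = z := by
    intro a x y z h1 h2 h3 h4 h5
    rcases tri0 a x y z with h | h | h | h | h | h
    · exact h
    · exact absurd h h1
    · exact absurd h h2
    · exact absurd h h3
    · exact absurd h h4
    · exact absurd h h5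
  -- consecutive adjacency in the cycle
  have hadj_succ : ∀ k (hk : k + 1 < n - 1),
      (SimpleGraph.cycleGraph (n - 1)).Adj ⟨k, by omega⟩ ⟨k + 1, hk⟩ := by
    intro k hk
    rw [SimpleGraph.cycleGraph_adj']
    right
    show (n - 1 - k + (k + 1)) % (n - 1) = 1
    have h1 : n - 1 - k + (k + 1) = (n - 1) + 1 := by omega
    rw [h1, Nat.add_mod_left]
    exact Nat.mod_eq_of_lt (by omega)
  have hadj_last : (SimpleGraph.cycleGraph (n - 1)).Adj ⟨n - 2, by omega⟩ ⟨0, by omega⟩ := by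
    rw [SimpleGraph.cycleGraph_adj']
    right
    show (n - 1 - (n - 2) + 0) % (n - 1) = 1
    have h1 : n - 1 - (n - 2) + 0 = 1 := by omega
    rw [h1]
    exact Nat.mod_eq_of_lt (by omega)
  -- parity of the colors along the cycle
  have key : ∀ k (hk : k < n - 1), (c ⟨k, hk⟩ = c ⟨0, by omega⟩ ↔ Even k) := by
    intro k
    induction k with
    | zero => simp
    | succ k ih =>
        intro hk
        have hk' : k < n - 1 := by omega
        have hne := hstep _ _ (hadj_succ k hk)
        by_cases hEv : Even k
        · have hc0 : c ⟨k, hk'⟩ = c ⟨0, by omega⟩ := (ih hk').mpr hEv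
          constructor
          · intro h
            exact absurd (h.trans hc0.symm) (fun hh => hne hh.symm)
          · intro h
            exact absurd h (by simp [Nat.even_add_one, hEv])
        · have hc0 : c ⟨k, hk'⟩ ≠ c ⟨0, by omega⟩ := fun h => hEv ((ih hk').mp h)
          constructor
          · intro _
            simpa [Nat.even_add_one] using hEv
          · intro _
            exact (tri a (c ⟨0, by omega⟩) (c ⟨k, hk'⟩) (c ⟨k + 1, hk⟩)
              (hca _) (hca _) (hca _) (fun h => hc0 h.symm) hne).symm
  have hev : Even (n - 2) := by
    rcases he with ⟨m, hm⟩
    exact ⟨m - 1, by omega⟩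
  have h1 : c ⟨n - 2, by omega⟩ = c ⟨0, by omega⟩ := (key (n - 2) (by omega)).mpr hev
  exact hstep _ _ hadj_last h1

theorem stmt_8 (n : ℕ) (hn : 8 ≤ n) (he : Even n) :
    ¬ Contains (threeCliques n) (wheel n) ∧
    ¬ Contains (threeCliques n)ᶜ (wheel n) ∧
    3 * n - 2 ≤ ramseyNumber (wheel n) (wheel n) := by
  refine ⟨not_contains_red n hn, not_contains_blue n hn he, ?_⟩
  have hSne : {N | RamseyProp N (wheel n) (wheel n)}.Nonempty := by
    obtain ⟨N, hN⟩ := ramsey_exists n n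
    refine ⟨N, fun C => ?_⟩
    rcases hN C with h | h
    · exact Or.inl (contains_wheel_of_clique (by omega) h)
    · exact Or.inr (contains_wheel_of_clique (by omega) h)
  refine le_csInf hSne ?_
  intro N hN
  by_contra hlt
  push_neg at hlt
  have hNle : N ≤ 3 * (n - 1) := by omega
  have hcard : Fintype.card (Fin N) ≤ Fintype.card (Fin 3 × Fin (n - 1)) := by
    simpa using hNle
  obtain ⟨ι⟩ := Function.Embedding.nonempty_of_card_le hcard
  set C : SimpleGraph (Fin N) := (threeCliques n).comap ι with hC
  rcases hN C with ⟨g, ginj⟩ | ⟨g, ginj⟩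
  · refine not_contains_red n hn ?_
    refine ⟨⟨fun v => ι (g v), fun {a b} h => g.map_adj h⟩,
      fun u v huv => ginj (ι.injective huv)⟩
  · refine not_contains_blue n hn he ?_
    refine ⟨⟨fun v => ι (g v), ?_⟩, fun u v huv => ginj (ι.injective huv)⟩
    intro u v huv
    obtain ⟨hne, hnadj⟩ := (SimpleGraph.compl_adj _ _ _).mp (g.map_adj huv)
    exact (SimpleGraph.compl_adj _ _ _).mpr ⟨fun h => hne (ι.injective h), hnadj⟩
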